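/- Let u = ∑_{i,j=1}^n u_{ij} x_i x_j be a quadratic element with invertible coefficient matrix (u_{ij}), and set w = u·z in the variables x_1,…,x_n,z. Then the cyclic derivatives of w are ∂_z(w) = u and ∂_{x_i}(w) = ∑_{j=1}^n (u_{ij} x_j z + u_{ji} z x_j) for 1 ≤ i ≤ n; these n+1 elements are linearly independent, so the space of relations R of A(w) has dimension n+1. -/

import Mathlib

open scoped TensorProduct BigOperators
noncomputable section

/-- The free associative algebra on `n` (degree-one) variables, realized as the
monoid algebra of the free monoid on `Fin n`. -/
abbrev FA (k : Type*) [CommRing k] (n : ℕ) := MonoidAlgebra k (FreeMonoid (Fin n))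

namespace FA

variable {k : Type*} [CommRing k] {n : ℕ}

/-- The monomial (word) `x_{p 0} x_{p 1} ⋯` associated to a list of indices. -/
def word (p : List (Fin n)) : FA k n := MonoidAlgebra.single (FreeMonoid.ofList p) 1

/-- The generator `x_i`. -/
def X (i : Fin n) : FA k n := word [i]

/-- Cyclic sum of a monomial: `c(a_1⋯a_r) = ∑_i a_i⋯a_r a_1⋯a_{i-1}`. -/
def cycWord (p : List (Fin n)) : FA k n :=
  ∑ i ∈ Finset.range p.length, word (p.rotate i)

/-- Cyclic sum operator `c : T(V) → T(V)`, extended linearly from monomials. -/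
def cyc (f : FA k n) : FA k n :=
  f.coeff.sum fun p a => a • cycWord (FreeMonoid.toList p)

/-- Cyclic derivative of a monomial: `∂_x(p) = ∑_{p = u x v} v u`. -/
def cycDerWord (x : Fin n) (p : List (Fin n)) : FA k n :=
  ∑ i ∈ Finset.range p.length,
    if p[i]? = some x then word (p.drop (i + 1) ++ p.take i) else 0

/-- Cyclic derivative `∂_x : T(V) → T(V)`, extended linearly from monomials. -/
def cycDer (x : Fin n) (f : FA k n) : FA k n :=
  f.coeff.sum fun p a => a • cycDerWord x (FreeMonoid.toList p)

/-- Ordinary partial derivative of a monomial: `∂p/∂x = ∑_{p = u x v} u ⊗ v`. -/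
def pderWord (x : Fin n) (p : List (Fin n)) : FA k n ⊗[k] FA k n :=
  ∑ i ∈ Finset.range p.length,
    if p[i]? = some x then (word (p.take i)) ⊗ₜ[k] (word (p.drop (i + 1))) else 0

/-- Ordinary partial derivative `∂/∂x : T(V) → T(V) ⊗ T(V)`, extended linearly. -/
def pder (x : Fin n) (f : FA k n) : FA k n ⊗[k] FA k n :=
  f.coeff.sum fun p a => a • pderWord x (FreeMonoid.toList p)

/-- `f` is homogeneous of degree `r`: every monomial in its support is a word of length `r`. -/
def IsHomog (r : ℕ) (f : FA k n) : Prop :=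
  ∀ p ∈ f.coeff.support, (FreeMonoid.toList p).length = r

end FA


namespace FA
variable {k : Type*} [CommRing k] {n : ℕ}

lemma cycDer_single (x : Fin n) (p : FreeMonoid (Fin n)) (a : k) :
    cycDer x (MonoidAlgebra.single p a) = a • cycDerWord x (FreeMonoid.toList p) := by
  unfold cycDer
  rw [MonoidAlgebra.coeff_single]
  exact Finsupp.sum_single_index (by simp)

lemma cycDer_smul (x : Fin n) (a : k) (f : FA k n) :
    cycDer x (a • f) = a • cycDer x f := by
  unfold cycDer
  rw [MonoidAlgebra.coeff_smul]
  rw [Finsupp.sum_smul_index fun p => by simp]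
  rw [Finsupp.smul_sum]
  simp [smul_smul]

lemma cycDer_add (x : Fin n) (f g : FA k n) :
    cycDer x (f + g) = cycDer x f + cycDer x g := by
  unfold cycDer
  rw [MonoidAlgebra.coeff_add]
  exact Finsupp.sum_add_index' (by simp) (by intros; exact add_smul _ _ _)

lemma word_mul (p q : List (Fin n)) : (word p : FA k n) * word q = word (p ++ q) := by
  unfold word
  rw [MonoidAlgebra.single_mul_single]
  simp only [mul_one]
  rfl

end FA

namespace FA
variable {k : Type*} [CommRing k] {n : ℕ}

lemma toList_ofList (p : List (Fin n)) : FreeMonoid.toList (FreeMonoid.ofList p) = p := rfl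

lemma cycDerWord_three (x a b c : Fin n) :
    cycDerWord x [a, b, c] = (if a = x then word [b, c] else (0 : FA k n))
      + (if b = x then word [c, a] else 0) + (if c = x then word [a, b] else 0) := by
  unfold cycDerWord
  simp [Finset.sum_range_succ]

instance : DecidableEq (FreeMonoid (Fin n)) :=
  fun a b => decidable_of_iff (FreeMonoid.toList a = FreeMonoid.toList b)
    ⟨fun h => FreeMonoid.toList.injective h, fun h => by rw [h]⟩

lemma word_apply (p q : List (Fin n)) :
    (word p : FA k n).coeff (FreeMonoid.ofList q) = if p = q then (1:k) else 0 := by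
  rw [word, MonoidAlgebra.coeff_single, Finsupp.single_apply]
  simp [EmbeddingLike.apply_eq_iff_eq]

end FA

namespace FA
variable {k : Type*} [CommRing k] {n : ℕ}

/-- Bundled cyclic derivative. -/
def cycDerL (x : Fin n) : FA k n →ₗ[k] FA k n where
  toFun := cycDer x
  map_add' := cycDer_add x
  map_smul' := cycDer_smul x

lemma cycDerL_apply (x : Fin n) (f : FA k n) : cycDerL x f = cycDer x f := rfl

lemma cycDer_word (x : Fin n) (p : List (Fin n)) :
    cycDer x (word p : FA k n) = cycDerWord x p := by
  rw [word, cycDer_single, toList_ofList, one_smul]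

end FA

section Main
variable {k : Type*} [Field k] {n : ℕ}

open FA

lemma cycDer_w3 (y : Fin (n+1)) (a b c : Fin (n+1)) :
    cycDer y (word [a,b,c] : FA k (n+1)) = (if a = y then word [b, c] else (0 : FA k (n+1)))
      + (if b = y then word [c, a] else 0) + (if c = y then word [a, b] else 0) := by
  rw [cycDer_word, cycDerWord_three]

end Main

open FA in
/-- For `w = u·z` with `u = ∑ u_{ij} xᵢxⱼ` non-degenerate: `∂_z(w) = u`,
`∂_{xᵢ}(w) = ∑ⱼ (u_{ij} xⱼz + u_{ji} z xⱼ)`, and these `n+1` cyclic derivatives are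
linearly independent, so the space of relations `R` of `A(w)` has dimension `n+1`. -/
theorem quadric_potential_relations {k : Type*} [Field k] [CharZero k] (n : ℕ)
    (hn : 2 ≤ n) (U : Matrix (Fin n) (Fin n) k) (hU : IsUnit U.det) :
    let x : Fin n → FA k (n + 1) := fun i => FA.X i.castSucc
    let z : FA k (n + 1) := FA.X (Fin.last n)
    let u : FA k (n + 1) := ∑ i, ∑ j, U i j • (x i * x j)
    let w : FA k (n + 1) := u * z
    FA.cycDer (Fin.last n) w = u ∧
    (∀ i : Fin n, FA.cycDer i.castSucc w =
        ∑ j, (U i j • (x j * z) + U j i • (z * x j))) ∧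
    LinearIndependent k (fun i : Fin (n + 1) => FA.cycDer i w) ∧
    Module.finrank k
      ↥(Submodule.span k (Set.range fun i : Fin (n + 1) => FA.cycDer i w)) = n + 1 := by
  intro x z u w
  have hw : ∀ a b : Fin n, (X a.castSucc * X b.castSucc : FA k (n+1)) * X (Fin.last n)
      = word [a.castSucc, b.castSucc, Fin.last n] := by
    intro a b; rw [X, X, X, word_mul, word_mul]; rfl
  have hxy : ∀ a b : Fin n, (X a.castSucc * X b.castSucc : FA k (n+1)) = word [a.castSucc, b.castSucc] := by
    intro a b; rw [X, X, word_mul]; rfl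
  have hxz : ∀ a : Fin n, (X a.castSucc * X (Fin.last n) : FA k (n+1)) = word [a.castSucc, Fin.last n] := by
    intro a; rw [X, X, word_mul]; rfl
  have hzx : ∀ a : Fin n, (X (Fin.last n) * X a.castSucc : FA k (n+1)) = word [Fin.last n, a.castSucc] := by
    intro a; rw [X, X, word_mul]; rfl
  have hwform : w = ∑ a, ∑ b, U a b • (word [a.castSucc, b.castSucc, Fin.last n] : FA k (n+1)) := by
    show u * z = _
    show (∑ a, ∑ b, U a b • (X a.castSucc * X b.castSucc : FA k (n+1))) * X (Fin.last n) = _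
    rw [Finset.sum_mul]
    simp_rw [Finset.sum_mul, smul_mul_assoc, hw]
  have h1 : FA.cycDer (Fin.last n) w = u := by
    rw [hwform, ← cycDerL_apply]
    simp_rw [map_sum, map_smul, cycDerL_apply, cycDer_w3]
    show _ = ∑ a, ∑ b, U a b • (X a.castSucc * X b.castSucc : FA k (n+1))
    simp [Fin.castSucc_lt_last, (Fin.castSucc_lt_last _).ne, hxy]
  have h2 : ∀ i : Fin n, FA.cycDer i.castSucc w =
      ∑ j, (U i j • (x j * z) + U j i • (z * x j)) := by
    intro i
    rw [hwform, ← cycDerL_apply]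
    simp_rw [map_sum, map_smul, cycDerL_apply, cycDer_w3]
    show _ = ∑ j, (U i j • (X j.castSucc * X (Fin.last n) : FA k (n+1)) + U j i • (X (Fin.last n) * X j.castSucc))
    simp only [Fin.castSucc_inj, (Fin.castSucc_lt_last _).ne', smul_add, hxz, hzx,
      if_false, add_zero, Finset.sum_add_distrib]
    rw [Finset.sum_comm (s := Finset.univ) (t := Finset.univ)
      (f := fun a b => U a b • if b = i then (word [Fin.last n, a.castSucc] : FA k (n+1)) else 0)]
    simp [smul_ite, Finset.sum_ite_eq', Finset.sum_ite_eq]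
  refine ⟨h1, h2, ?_⟩
  have huform : u = ∑ a, ∑ b, U a b • (word [a.castSucc, b.castSucc] : FA k (n+1)) := by
    show (∑ a, ∑ b, U a b • (X a.castSucc * X b.castSucc : FA k (n+1))) = _
    simp_rw [hxy]
  have hLI : LinearIndependent k (fun i : Fin (n + 1) => FA.cycDer i w) := by
    rw [Fintype.linearIndependent_iff]
    intro c hc
    rw [Fin.sum_univ_castSucc] at hc
    simp_rw [h2, h1, huform, x, z, hxz, hzx] at hc
    have key : ∀ j0 : Fin n, ∑ i, c i.castSucc * U i j0 = 0 := by
      intro j0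
      have e := congrArg (fun f : FA k (n+1) => f.coeff (FreeMonoid.ofList [j0.castSucc, Fin.last n])) hc
      simp only [MonoidAlgebra.coeff_add, MonoidAlgebra.coeff_sum, Finsupp.add_apply,
          Finsupp.finset_sum_apply, MonoidAlgebra.coeff_smul_apply, MonoidAlgebra.coeff_zero,
          Finsupp.zero_apply, word_apply,
        smul_eq_mul, map_zero] at e
      simp only [List.cons.injEq, Fin.castSucc_inj, (Fin.castSucc_lt_last _).ne,
        (Fin.castSucc_lt_last _).ne', and_true, and_false, if_false, if_neg,
        mul_zero, mul_one, mul_ite, Finset.sum_ite_eq', Finset.mem_univ, if_true,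
        Finset.sum_const_zero, add_zero, false_and] at e
      simpa using e
    have hcz : ∀ i : Fin n, c i.castSucc = 0 := by
      have hv : Matrix.vecMul (fun i => c i.castSucc) U = 0 := by
        funext j
        exact key j
      have h3 : (fun i => c i.castSucc)
          = Matrix.vecMul (Matrix.vecMul (fun i => c i.castSucc) U) U⁻¹ := by
        rw [Matrix.vecMul_vecMul, Matrix.mul_nonsing_inv U hU, Matrix.vecMul_one]
      have h4 : Matrix.vecMul (Matrix.vecMul (fun i => c i.castSucc) U) U⁻¹ = 0 := by
        rw [hv]; exact Matrix.zero_vecMul _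
      intro i
      exact congrFun (h3.trans h4) i
    have hUne : ∃ a b, U a b ≠ 0 := by
      by_contra h
      push_neg at h
      have hz : U = 0 := by ext a b; exact h a b
      rw [hz] at hU
      haveI : Nonempty (Fin n) := ⟨⟨0, by omega⟩⟩
      simp [Matrix.det_zero] at hU
    obtain ⟨a0, b0, hab⟩ := hUne
    have hclast : c (Fin.last n) = 0 := by
      have e := congrArg (fun f : FA k (n+1) => f.coeff (FreeMonoid.ofList [a0.castSucc, b0.castSucc])) hc
      simp only [MonoidAlgebra.coeff_add, MonoidAlgebra.coeff_sum, Finsupp.add_apply,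
          Finsupp.finset_sum_apply, MonoidAlgebra.coeff_smul_apply, MonoidAlgebra.coeff_zero,
          Finsupp.zero_apply, word_apply,
        smul_eq_mul, map_zero] at e
      simp only [List.cons.injEq, Fin.castSucc_inj, (Fin.castSucc_lt_last _).ne,
        (Fin.castSucc_lt_last _).ne', and_true, and_false, if_false, if_neg,
        mul_zero, mul_one, mul_ite, Finset.sum_ite_eq', Finset.mem_univ, if_true,
        Finset.sum_const_zero, add_zero, zero_add, false_and,
        Finset.sum_const_zero] at e
      rw [show (∑ a : Fin n, ∑ b : Fin n, if a = a0 ∧ b = b0 then U a b else 0) = U a0 b0 by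
        simp [ite_and, Finset.sum_ite_eq', Finset.sum_ite_eq]] at e
      rcases mul_eq_zero.mp e with h' | h'
      · exact h'
      · exact absurd h' hab
    intro i
    refine Fin.lastCases hclast (fun j => hcz j) i
  refine ⟨hLI, ?_⟩
  rw [finrank_span_eq_card hLI]
  simp
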